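/- Let K be a field and S a set of elements of 𝔽. Let 𝔇(Σ) be the class of groups G admitting an injective group homomorphism into the group of units A× of some unital associative K-algebra A satisfying μ(f) = 0 for every f ∈ S and every K-algebra homomorphism μ : 𝔽 → A. Then 𝔇(Σ) is a quasivariety of groups: (i) the trivial group belongs to 𝔇(Σ); (ii) every subgroup of a group in 𝔇(Σ) belongs to 𝔇(Σ); (iii) 𝔇(Σ) is closed under filtered products: if G_i ∈ 𝔇(Σ) for all i in an index set ι and D is a filter on ι, then the quotient of ∏ G_i by the normal subgroup N = {g ∈ ∏ G_i : {i ∈ ι : g(i) = 1} ∈ D} belongs to 𝔇(Σ). -/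

import Mathlib

/-- A witness that the group `G` is a PI-group for the variety `Σ` of associative
`K`-algebras determined by the identities `f = 0`, `f ∈ S ⊆ 𝔽 = FreeAlgebra K ℕ`: a
faithful linearization of `G` in an algebra from `Σ`, i.e. an injective group homomorphism
of `G` into the unit group of an algebra satisfying all the identities from `S`. -/
structure PIGroupWitness (K : Type) [Field K] (S : Set (FreeAlgebra K ℕ))
    (G : Type) [Group G] where
  A : Type
  [ringA : Ring A]
  [algebraA : Algebra K A]
  identities : ∀ f ∈ S, ∀ μ : FreeAlgebra K ℕ →ₐ[K] A, μ f = 0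
  ρ : G →* Aˣ
  injective : Function.Injective ρ

/-- Membership in the class `𝔇(Σ)` of all PI-groups for `Σ`. -/
def MemD (K : Type) [Field K] (S : Set (FreeAlgebra K ℕ)) (G : Type) [Group G] : Prop :=
  Nonempty (PIGroupWitness K S G)

/-- The subgroup of the product `∀ i, G i` consisting of the elements equal to `1` on a set
of indices belonging to the filter `D`; the filtered product is the quotient by it. -/
def filterKernel (ι : Type) (G : ι → Type) [∀ i, Group (G i)] (D : Filter ι) :
    Subgroup (∀ i, G i) where
  carrier := {g | {i | g i = 1} ∈ D}
  one_mem' := Filter.univ_mem' fun i => Pi.one_apply i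
  mul_mem' := by
    intro a b ha hb
    filter_upwards [ha, hb] with i hai hbi
    simp only [Set.mem_setOf_eq] at *
    simp [hai, hbi]
  inv_mem' := by
    intro a ha
    filter_upwards [ha] with i hai
    simp only [Set.mem_setOf_eq] at *
    simp [hai]

instance filterKernel_normal (ι : Type) (G : ι → Type) [∀ i, Group (G i)] (D : Filter ι) :
    (filterKernel ι G D).Normal where
  conj_mem := by
    intro a ha g
    show {i | (g * a * g⁻¹) i = 1} ∈ D
    filter_upwards [ha] with i hai
    have hai' : a i = 1 := hai
    show (g * a * g⁻¹) i = 1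
    simp [Pi.mul_apply, Pi.inv_apply, hai']

/-! Auxiliary constructions for filtered products. -/

def filterRingCon {ι : Type} (D : Filter ι) (A : ι → Type) [∀ i, Ring (A i)] :
    RingCon (∀ i, A i) :=
  RingCon.mk
    (Con.mk
      ⟨fun a b => {i | a i = b i} ∈ D,
        ⟨fun _ => Filter.univ_mem' fun _ => rfl,
         fun h => by filter_upwards [h] with i hi using hi.symm,
         fun h1 h2 => by filter_upwards [h1, h2] with i hi hj using hi.trans hj⟩⟩
      (fun h1 h2 => by filter_upwards [h1, h2] with i hi hj; simp [hi, hj]))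
    (fun h1 h2 => by filter_upwards [h1, h2] with i hi hj; simp [hi, hj])

section
variable (K : Type) [Field K] {ι : Type} (D : Filter ι) (A : ι → Type)
  [∀ i, Ring (A i)] [∀ i, Algebra K (A i)]

noncomputable instance filterQuotAlgebra : Algebra K (filterRingCon D A).Quotient :=
  RingHom.toAlgebra'
    (((filterRingCon D A).mk').comp (algebraMap K (∀ i, A i)))
    (by
      intro k x
      induction x using Quotient.inductionOn with
      | h a =>
        show ((filterRingCon D A).mk' _) * ((filterRingCon D A).mk' a)
            = ((filterRingCon D A).mk' a) * ((filterRingCon D A).mk' _)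
        rw [← map_mul, ← map_mul, Algebra.commutes])

noncomputable def filterQuotAlgHom : (∀ i, A i) →ₐ[K] (filterRingCon D A).Quotient :=
  { (filterRingCon D A).mk' with commutes' := fun _ => rfl }

theorem filterQuot_identities (S : Set (FreeAlgebra K ℕ))
    (h : ∀ i, ∀ f ∈ S, ∀ μ : FreeAlgebra K ℕ →ₐ[K] A i, μ f = 0)
    (f : FreeAlgebra K ℕ) (hf : f ∈ S)
    (μ : FreeAlgebra K ℕ →ₐ[K] (filterRingCon D A).Quotient) : μ f = 0 := by
  have hsurj : Function.Surjective ((filterRingCon D A).mk') := Quotient.mk''_surjective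
  choose lift hlift using fun n => hsurj (μ (FreeAlgebra.ι K n))
  let ν : FreeAlgebra K ℕ →ₐ[K] (∀ i, A i) := FreeAlgebra.lift K lift
  have hcomp : (filterQuotAlgHom K D A).comp ν = μ := by
    apply FreeAlgebra.hom_ext
    funext n
    simp [ν, filterQuotAlgHom, hlift]
    exact hlift n
  have hν : ν f = 0 := by
    funext i
    have := h i f hf ((Pi.evalAlgHom K A i).comp ν)
    simpa using this
  calc μ f = (filterQuotAlgHom K D A) (ν f) := by rw [← hcomp]; rfl
    _ = 0 := by rw [hν, map_zero]

end

/-- the class `𝔇(Σ)` is a quasivariety of groups: it contains the trivial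
group, is closed under subgroups, and is closed under filtered products. -/
theorem PIgroups_quasivariety (K : Type) [Field K] (S : Set (FreeAlgebra K ℕ)) :
    MemD K S PUnit ∧
    (∀ (G : Type) [Group G] (H : Subgroup G), MemD K S G → MemD K S H) ∧
    (∀ (ι : Type) (G : ι → Type) [∀ i, Group (G i)] (D : Filter ι),
        (∀ i, MemD K S (G i)) → MemD K S ((∀ i, G i) ⧸ filterKernel ι G D)) := by
  refine ⟨?_, ?_, ?_⟩
  · exact ⟨{ A := PUnit
             identities := fun _ _ _ => Subsingleton.elim _ _
             ρ := 1
             injective := fun a b _ => Subsingleton.elim a b }⟩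
  · rintro G _ H ⟨w⟩
    letI := w.ringA; letI := w.algebraA
    exact ⟨{ A := w.A
             identities := w.identities
             ρ := w.ρ.comp H.subtype
             injective := w.injective.comp Subtype.coe_injective }⟩
  · intro ι G _ D hG
    have w : ∀ i, PIGroupWitness K S (G i) := fun i => (hG i).some
    letI : ∀ i, Ring (w i).A := fun i => (w i).ringA
    letI : ∀ i, Algebra K (w i).A := fun i => (w i).algebraA
    set A : ι → Type := fun i => (w i).A with hA
    set c := filterRingCon D A with hc
    -- group hom from the product into the units of the quotient
    let ρ0 : (∀ i, G i) →* (∀ i, A i)ˣ :=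
      { toFun := fun g =>
          { val := fun i => ((w i).ρ (g i) : A i)
            inv := fun i => (((w i).ρ (g i))⁻¹ : (A i)ˣ)
            val_inv := by funext i; exact Units.mul_inv _
            inv_val := by funext i; exact Units.inv_mul _ }
        map_one' := by ext i; simp
        map_mul' := fun a b => by ext i; simp }
    let φ : (∀ i, G i) →* c.Quotientˣ :=
      (Units.map (c.mk' : (∀ i, A i) →+* c.Quotient).toMonoidHom).comp ρ0
    have hker : ∀ g : ∀ i, G i, φ g = 1 ↔ g ∈ filterKernel ι G D := by
      intro g
      constructor
      · intro h
        have h' : c.mk' (ρ0 g : (∀ i, A i)) = c.mk' 1 := by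
          simpa [φ, Units.ext_iff] using h
        have h2 : c ((ρ0 g : (∀ i, A i))) 1 := by
          rw [← RingCon.eq]; exact h'
        show {i | g i = 1} ∈ D
        filter_upwards [h2] with i hi
        have hi' : ((w i).ρ (g i) : A i) = 1 := hi
        exact (w i).injective (by ext; simpa using hi')
      · intro h
        have h2 : {i | ((w i).ρ (g i) : A i) = 1} ∈ D := by
          filter_upwards [h] with i hi
          show ((w i).ρ (g i) : A i) = 1
          have : g i = 1 := hi
          simp [this]
        refine Units.ext ?_
        show c.mk' (ρ0 g : (∀ i, A i)) = 1
        
        have : c ((ρ0 g : (∀ i, A i))) 1 := h2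
        calc c.mk' (ρ0 g : (∀ i, A i)) = c.mk' 1 := (RingCon.eq c).mpr this
          _ = 1 := map_one _
    -- lift to the quotient group
    let ψ : ((∀ i, G i) ⧸ filterKernel ι G D) →* c.Quotientˣ :=
      QuotientGroup.lift (filterKernel ι G D) φ (fun g hg => (hker g).mpr hg)
    have hinj : Function.Injective ψ := by
      rw [← MonoidHom.ker_eq_bot_iff]
      rw [eq_bot_iff]
      intro x hx
      induction x using QuotientGroup.induction_on with
      | H g =>
        have : φ g = 1 := hx
        have hg : g ∈ filterKernel ι G D := (hker g).mp this
        simpa [Subgroup.mem_bot, QuotientGroup.eq_one_iff] using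
          (QuotientGroup.eq_one_iff g).mpr hg
    exact ⟨{ A := c.Quotient
             identities := fun f hf μ =>
               filterQuot_identities K D A S (fun i => (w i).identities) f hf μ
             ρ := ψ
             injective := hinj }⟩
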